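/- For any commutative ring R, any n : ℕ, and any derivation D of A = MvPolynomial (Fin n) R: if the Jacobian matrix J(D) is nilpotent, say J(D)^m = 0, then the right multiplication operator by D is nilpotent, i.e., for every derivation E of A, the m-fold right product (((E ⋆ D) ⋆ D) ⋆ ⋯ ) ⋆ D (with m factors of D) equals 0. -/

import Mathlib

/-- The left-symmetric product on derivations of `MvPolynomial (Fin n) R`:
`D ⋆ E` is the unique derivation with `(D ⋆ E) (X i) = D (E (X i))`. -/
noncomputable def lsmul {R : Type*} [CommRing R] {n : ℕ}
    (D E : Derivation R (MvPolynomial (Fin n) R) (MvPolynomial (Fin n) R)) :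
    Derivation R (MvPolynomial (Fin n) R) (MvPolynomial (Fin n) R) :=
  MvPolynomial.mkDerivation R (fun i => D (E (MvPolynomial.X i)))

/-- The Jacobian matrix of a derivation: `jac D j i = ∂ᵢ (D (X j))`. -/
noncomputable def jac {R : Type*} [CommRing R] {n : ℕ}
    (D : Derivation R (MvPolynomial (Fin n) R) (MvPolynomial (Fin n) R)) :
    Matrix (Fin n) (Fin n) (MvPolynomial (Fin n) R) :=
  Matrix.of fun j i => MvPolynomial.pderiv i (D (MvPolynomial.X j))

/-- Iterated right multiplication by `D`: `rIter E D m = (((E ⋆ D) ⋆ D) ⋆ ⋯) ⋆ D`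
with `m` factors of `D`. -/
noncomputable def rIter {R : Type*} [CommRing R] {n : ℕ}
    (E D : Derivation R (MvPolynomial (Fin n) R) (MvPolynomial (Fin n) R)) :
    ℕ → Derivation R (MvPolynomial (Fin n) R) (MvPolynomial (Fin n) R)
  | 0 => E
  | (m + 1) => lsmul (rIter E D m) D


lemma dsum_apply {R A M : Type*} [CommRing R] [CommRing A] [Algebra R A]
    [AddCommGroup M] [Module A M] [Module R M] {ι : Type*} (s : Finset ι)
    (f : ι → Derivation R A M) (a : A) :
    (∑ i ∈ s, f i) a = ∑ i ∈ s, f i a := by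
  classical
  induction s using Finset.induction with
  | empty => simp
  | insert _ _ h ih => rw [Finset.sum_insert h, Finset.sum_insert h, Derivation.add_apply, ih]

open MvPolynomial in
/-- Chain rule: a derivation applied to `p` is `∑ j, ∂ⱼ p * F (X j)`. -/
lemma deriv_chain {R : Type*} [CommRing R] {n : ℕ}
    (F : Derivation R (MvPolynomial (Fin n) R) (MvPolynomial (Fin n) R))
    (p : MvPolynomial (Fin n) R) :
    F p = ∑ j, pderiv j p * F (X j) := by
  have : F = ∑ j, F (X j) • pderiv j := by
    apply derivation_ext
    intro i
    rw [dsum_apply]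
    simp [pderiv_X, Pi.single_apply, smul_eq_mul]
  conv_lhs => rw [this, dsum_apply]
  simp [mul_comm]

open MvPolynomial in
lemma rIter_X {R : Type*} [CommRing R] {n : ℕ}
    (E D : Derivation R (MvPolynomial (Fin n) R) (MvPolynomial (Fin n) R))
    (m : ℕ) (i : Fin n) :
    rIter E D m (X i) = ∑ j, (jac D ^ m) i j * E (X j) := by
  induction m generalizing i with
  | zero => simp [rIter, Matrix.one_apply]
  | succ m ih =>
    rw [rIter, lsmul, mkDerivation_X, deriv_chain (rIter E D m) (D (X i))]
    simp only [ih, Finset.mul_sum, pow_succ']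
    rw [Finset.sum_comm]
    refine Finset.sum_congr rfl fun k _ => ?_
    rw [Matrix.mul_apply, Finset.sum_mul]
    refine Finset.sum_congr rfl fun j _ => ?_
    rw [jac, Matrix.of_apply, mul_assoc]

/-- If the Jacobian matrix of `D` is nilpotent, say `J(D)^m = 0`, then the right
multiplication operator by `D` is nilpotent: the `m`-fold right product of any `E`
by `D` vanishes. -/
theorem rightMul_nilpotent_of_jac_pow_eq_zero (R : Type*) [CommRing R] (n : ℕ)
    (D : Derivation R (MvPolynomial (Fin n) R) (MvPolynomial (Fin n) R))
    (m : ℕ) (h : jac D ^ m = 0)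
    (E : Derivation R (MvPolynomial (Fin n) R) (MvPolynomial (Fin n) R)) :
    rIter E D m = 0 := by
  apply MvPolynomial.derivation_ext
  intro i
  rw [rIter_X, h]
  simp
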